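/- For every integer k ≥ 2, the generalized Petersen graph GP(2k+1, k) admits a red-blue vertex coloring in which every blue component is an isolated vertex or an edge and every red component is a star with 1, 2, or 3 edges. -/

import Mathlib

set_option maxHeartbeats 1000000

def GP (n k : ℕ) : SimpleGraph (Bool × ZMod n) :=
  SimpleGraph.fromRel (fun a b =>
    (a.1 = false ∧ b.1 = false ∧ b.2 = a.2 + 1) ∨
    (a.1 = false ∧ b.1 = true ∧ a.2 = b.2) ∨
    (a.1 = true ∧ b.1 = true ∧ b.2 = a.2 + (k : ZMod n)))

/-- A crumby coloring: `red v = true` means `v` is red. Blue components are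
isolated vertices or single edges (blue induced max degree ≤ 1); the red induced
subgraph has min degree ≥ 1 and contains no path with 3 edges, i.e. every red
component is a star with 1, 2 or 3 edges. -/
def Crumby {V : Type*} (G : SimpleGraph V) (red : V → Bool) : Prop :=
  (∀ v, red v = false → {w | G.Adj v w ∧ red w = false}.Subsingleton) ∧
  (∀ v, red v = true → ∃ w, G.Adj v w ∧ red w = true) ∧
  ¬ ∃ a b c d : V, red a = true ∧ red b = true ∧ red c = true ∧ red d = true ∧
      a ≠ b ∧ a ≠ c ∧ a ≠ d ∧ b ≠ c ∧ b ≠ d ∧ c ≠ d ∧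
      G.Adj a b ∧ G.Adj b c ∧ G.Adj c d

namespace GPCrumby

def PTm (n x : ℕ) : Prop :=
  (n = 9 ∧ (x = 1 ∨ x = 2 ∨ x = 3 ∨ x = 5 ∨ x = 8)) ∨
  (n ≠ 9 ∧ n % 5 = 0 ∧ ((x + 5 < n ∧ x % 5 ≠ 0 ∧ x % 5 ≠ 3) ∨ (n ≤ x + 5 ∧ x + 5 ≠ n ∧ x + 5 ≠ n + 3))) ∨
  (n ≠ 9 ∧ n % 5 = 1 ∧ ((x + 6 < n ∧ x % 5 ≠ 0 ∧ x % 5 ≠ 3) ∨ (n ≤ x + 6 ∧ x + 6 ≠ n ∧ x + 6 ≠ n + 3 ∧ x + 6 ≠ n + 5))) ∨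
  (n ≠ 9 ∧ n % 5 = 2 ∧ ((x + 7 < n ∧ x % 5 ≠ 0 ∧ x % 5 ≠ 3) ∨ (n ≤ x + 7 ∧ (x + 7 = n + 1 ∨ x + 7 = n + 2 ∨ x + 7 = n + 5)))) ∨
  (n ≠ 9 ∧ n % 5 = 3 ∧ ((x + 8 < n ∧ x % 5 ≠ 0 ∧ x % 5 ≠ 3) ∨ (n ≤ x + 8 ∧ (x + 8 = n + 2 ∨ x + 8 = n + 3 ∨ x + 8 = n + 6)))) ∨
  (n ≠ 9 ∧ n % 5 = 4 ∧ ((x + 9 < n ∧ x % 5 ≠ 0 ∧ x % 5 ≠ 3) ∨ (n ≤ x + 9 ∧ (x + 9 = n + 2 ∨ x + 9 = n + 3 ∨ x + 9 = n + 4 ∨ x + 9 = n + 7))))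

def PFm (n x : ℕ) : Prop :=
  (n = 9 ∧ (x = 2 ∨ x = 5 ∨ x = 6 ∨ x = 7 ∨ x = 8)) ∨
  (n ≠ 9 ∧ n % 5 = 0 ∧ ((x + 5 < n ∧ x % 5 ≠ 1 ∧ x % 5 ≠ 2) ∨ (n ≤ x + 5 ∧ x + 5 ≠ n + 1 ∧ x + 5 ≠ n + 2))) ∨
  (n ≠ 9 ∧ n % 5 = 1 ∧ ((x + 6 < n ∧ x % 5 ≠ 1 ∧ x % 5 ≠ 2) ∨ (n ≤ x + 6 ∧ x + 6 ≠ n + 1 ∧ x + 6 ≠ n + 2))) ∨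
  (n ≠ 9 ∧ n % 5 = 2 ∧ ((x + 7 < n ∧ x % 5 ≠ 1 ∧ x % 5 ≠ 2) ∨ (n ≤ x + 7 ∧ x + 7 ≠ n + 1 ∧ x + 7 ≠ n + 2))) ∨
  (n ≠ 9 ∧ n % 5 = 3 ∧ ((x + 8 < n ∧ x % 5 ≠ 1 ∧ x % 5 ≠ 2) ∨ (n ≤ x + 8 ∧ x + 8 ≠ n + 2 ∧ x + 8 ≠ n + 3))) ∨
  (n ≠ 9 ∧ n % 5 = 4 ∧ ((x + 9 < n ∧ x % 5 ≠ 1 ∧ x % 5 ≠ 2) ∨ (n ≤ x + 9 ∧ x + 9 ≠ n + 2 ∧ x + 9 ≠ n + 3 ∧ x + 9 ≠ n + 4)))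

def CTm (n x : ℕ) : Prop :=
  (n = 9 ∧ (x = 2)) ∨
  (n ≠ 9 ∧ n % 5 = 0 ∧ ((x % 5 = 1 ∨ x % 5 = 4))) ∨
  (n ≠ 9 ∧ n % 5 = 1 ∧ ((x + 6 < n ∧ (x % 5 = 1 ∨ x % 5 = 4)) ∨ x + 5 = n)) ∨
  (n ≠ 9 ∧ n % 5 = 2 ∧ ((x + 7 < n ∧ (x % 5 = 1 ∨ x % 5 = 4)) ∨ x + 6 = n)) ∨
  (n ≠ 9 ∧ n % 5 = 3 ∧ ((x + 8 < n ∧ (x % 5 = 1 ∨ x % 5 = 4) ∧ x + 9 ≠ n) ∨ x + 6 = n)) ∨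
  (n ≠ 9 ∧ n % 5 = 4 ∧ ((x + 9 < n ∧ (x % 5 = 1 ∨ x % 5 = 4) ∧ x + 10 ≠ n) ∨ x + 6 = n))

def CFm (n x : ℕ) : Prop :=
  (n = 9 ∧ (x = 5 ∨ x = 8)) ∨
  (n ≠ 9 ∧ n % 5 = 0 ∧ (x % 5 = 3)) ∨
  (n ≠ 9 ∧ n % 5 = 1 ∧ ((x + 6 < n ∧ x % 5 = 3) ∨ x + 3 = n ∨ x + 2 = n)) ∨
  (n ≠ 9 ∧ n % 5 = 2 ∧ ((x + 7 < n ∧ x % 5 = 3) ∨ x + 3 = n ∨ x + 2 = n)) ∨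
  (n ≠ 9 ∧ n % 5 = 3 ∧ ((x + 8 < n ∧ x % 5 = 3) ∨ x + 9 = n ∨ x + 3 = n ∨ x + 2 = n)) ∨
  (n ≠ 9 ∧ n % 5 = 4 ∧ ((x + 9 < n ∧ x % 5 = 3) ∨ x + 10 = n ∨ x + 3 = n ∨ x + 2 = n))

instance (n x : ℕ) : Decidable (PTm n x) := by unfold PTm; infer_instance
instance (n x : ℕ) : Decidable (PFm n x) := by unfold PFm; infer_instance

lemma PTm_9 {n : ℕ} (h9 : n = 9) (x : ℕ) : PTm n x ↔ (x = 1 ∨ x = 2 ∨ x = 3 ∨ x = 5 ∨ x = 8) := by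
  subst h9; unfold PTm; omega

lemma PTm_0 {n : ℕ} (h9 : n ≠ 9) (hr : n % 5 = 0) (x : ℕ) :
    PTm n x ↔ ((x + 5 < n ∧ x % 5 ≠ 0 ∧ x % 5 ≠ 3) ∨ (n ≤ x + 5 ∧ x + 5 ≠ n ∧ x + 5 ≠ n + 3)) := by
  unfold PTm; omega

lemma PTm_1 {n : ℕ} (h9 : n ≠ 9) (hr : n % 5 = 1) (x : ℕ) :
    PTm n x ↔ ((x + 6 < n ∧ x % 5 ≠ 0 ∧ x % 5 ≠ 3) ∨ (n ≤ x + 6 ∧ x + 6 ≠ n ∧ x + 6 ≠ n + 3 ∧ x + 6 ≠ n + 5)) := by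
  unfold PTm; omega

lemma PTm_2 {n : ℕ} (h9 : n ≠ 9) (hr : n % 5 = 2) (x : ℕ) :
    PTm n x ↔ ((x + 7 < n ∧ x % 5 ≠ 0 ∧ x % 5 ≠ 3) ∨ (n ≤ x + 7 ∧ (x + 7 = n + 1 ∨ x + 7 = n + 2 ∨ x + 7 = n + 5))) := by
  unfold PTm; omega

lemma PTm_3 {n : ℕ} (h9 : n ≠ 9) (hr : n % 5 = 3) (x : ℕ) :
    PTm n x ↔ ((x + 8 < n ∧ x % 5 ≠ 0 ∧ x % 5 ≠ 3) ∨ (n ≤ x + 8 ∧ (x + 8 = n + 2 ∨ x + 8 = n + 3 ∨ x + 8 = n + 6))) := by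
  unfold PTm; omega

lemma PTm_4 {n : ℕ} (h9 : n ≠ 9) (hr : n % 5 = 4) (x : ℕ) :
    PTm n x ↔ ((x + 9 < n ∧ x % 5 ≠ 0 ∧ x % 5 ≠ 3) ∨ (n ≤ x + 9 ∧ (x + 9 = n + 2 ∨ x + 9 = n + 3 ∨ x + 9 = n + 4 ∨ x + 9 = n + 7))) := by
  unfold PTm; omega

lemma PFm_9 {n : ℕ} (h9 : n = 9) (x : ℕ) : PFm n x ↔ (x = 2 ∨ x = 5 ∨ x = 6 ∨ x = 7 ∨ x = 8) := by
  subst h9; unfold PFm; omega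

lemma PFm_0 {n : ℕ} (h9 : n ≠ 9) (hr : n % 5 = 0) (x : ℕ) :
    PFm n x ↔ ((x + 5 < n ∧ x % 5 ≠ 1 ∧ x % 5 ≠ 2) ∨ (n ≤ x + 5 ∧ x + 5 ≠ n + 1 ∧ x + 5 ≠ n + 2)) := by
  unfold PFm; omega

lemma PFm_1 {n : ℕ} (h9 : n ≠ 9) (hr : n % 5 = 1) (x : ℕ) :
    PFm n x ↔ ((x + 6 < n ∧ x % 5 ≠ 1 ∧ x % 5 ≠ 2) ∨ (n ≤ x + 6 ∧ x + 6 ≠ n + 1 ∧ x + 6 ≠ n + 2)) := by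
  unfold PFm; omega

lemma PFm_2 {n : ℕ} (h9 : n ≠ 9) (hr : n % 5 = 2) (x : ℕ) :
    PFm n x ↔ ((x + 7 < n ∧ x % 5 ≠ 1 ∧ x % 5 ≠ 2) ∨ (n ≤ x + 7 ∧ x + 7 ≠ n + 1 ∧ x + 7 ≠ n + 2)) := by
  unfold PFm; omega

lemma PFm_3 {n : ℕ} (h9 : n ≠ 9) (hr : n % 5 = 3) (x : ℕ) :
    PFm n x ↔ ((x + 8 < n ∧ x % 5 ≠ 1 ∧ x % 5 ≠ 2) ∨ (n ≤ x + 8 ∧ x + 8 ≠ n + 2 ∧ x + 8 ≠ n + 3)) := by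
  unfold PFm; omega

lemma PFm_4 {n : ℕ} (h9 : n ≠ 9) (hr : n % 5 = 4) (x : ℕ) :
    PFm n x ↔ ((x + 9 < n ∧ x % 5 ≠ 1 ∧ x % 5 ≠ 2) ∨ (n ≤ x + 9 ∧ x + 9 ≠ n + 2 ∧ x + 9 ≠ n + 3 ∧ x + 9 ≠ n + 4)) := by
  unfold PFm; omega

lemma CTm_9 {n : ℕ} (h9 : n = 9) (x : ℕ) : CTm n x ↔ (x = 2) := by
  subst h9; unfold CTm; omega

lemma CTm_0 {n : ℕ} (h9 : n ≠ 9) (hr : n % 5 = 0) (x : ℕ) :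
    CTm n x ↔ ((x % 5 = 1 ∨ x % 5 = 4)) := by
  unfold CTm; omega

lemma CTm_1 {n : ℕ} (h9 : n ≠ 9) (hr : n % 5 = 1) (x : ℕ) :
    CTm n x ↔ ((x + 6 < n ∧ (x % 5 = 1 ∨ x % 5 = 4)) ∨ x + 5 = n) := by
  unfold CTm; omega

lemma CTm_2 {n : ℕ} (h9 : n ≠ 9) (hr : n % 5 = 2) (x : ℕ) :
    CTm n x ↔ ((x + 7 < n ∧ (x % 5 = 1 ∨ x % 5 = 4)) ∨ x + 6 = n) := by
  unfold CTm; omega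

lemma CTm_3 {n : ℕ} (h9 : n ≠ 9) (hr : n % 5 = 3) (x : ℕ) :
    CTm n x ↔ ((x + 8 < n ∧ (x % 5 = 1 ∨ x % 5 = 4) ∧ x + 9 ≠ n) ∨ x + 6 = n) := by
  unfold CTm; omega

lemma CTm_4 {n : ℕ} (h9 : n ≠ 9) (hr : n % 5 = 4) (x : ℕ) :
    CTm n x ↔ ((x + 9 < n ∧ (x % 5 = 1 ∨ x % 5 = 4) ∧ x + 10 ≠ n) ∨ x + 6 = n) := by
  unfold CTm; omega

lemma CFm_9 {n : ℕ} (h9 : n = 9) (x : ℕ) : CFm n x ↔ (x = 5 ∨ x = 8) := by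
  subst h9; unfold CFm; omega

lemma CFm_0 {n : ℕ} (h9 : n ≠ 9) (hr : n % 5 = 0) (x : ℕ) :
    CFm n x ↔ (x % 5 = 3) := by
  unfold CFm; omega

lemma CFm_1 {n : ℕ} (h9 : n ≠ 9) (hr : n % 5 = 1) (x : ℕ) :
    CFm n x ↔ ((x + 6 < n ∧ x % 5 = 3) ∨ x + 3 = n ∨ x + 2 = n) := by
  unfold CFm; omega

lemma CFm_2 {n : ℕ} (h9 : n ≠ 9) (hr : n % 5 = 2) (x : ℕ) :
    CFm n x ↔ ((x + 7 < n ∧ x % 5 = 3) ∨ x + 3 = n ∨ x + 2 = n) := by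
  unfold CFm; omega

lemma CFm_3 {n : ℕ} (h9 : n ≠ 9) (hr : n % 5 = 3) (x : ℕ) :
    CFm n x ↔ ((x + 8 < n ∧ x % 5 = 3) ∨ x + 9 = n ∨ x + 3 = n ∨ x + 2 = n) := by
  unfold CFm; omega

lemma CFm_4 {n : ℕ} (h9 : n ≠ 9) (hr : n % 5 = 4) (x : ℕ) :
    CFm n x ↔ ((x + 9 < n ∧ x % 5 = 3) ∨ x + 10 = n ∨ x + 3 = n ∨ x + 2 = n) := by
  unfold CFm; omega

lemma redF_nbrW {n x y z : ℕ} (hn : 5 ≤ n) (h2 : n % 2 = 1)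
    (hx : x < n) (hy : y < n) (hz : z < n)
    (hxy : x = y + 2 ∨ x + n = y + 2) (hzx : z = x + 2 ∨ z + n = x + 2)
    (h : PFm n x)
    : PFm n y ∨ PFm n z ∨ PTm n x := by
  by_cases h9 : n = 9
  · simp only [PTm_9 h9, PFm_9 h9, CTm_9 h9, CFm_9 h9] at *
    rcases hxy with h1 | h1 <;> rcases hzx with hz1 | hz1 <;> omega
  · have hr : n % 5 = 0 ∨ n % 5 = 1 ∨ n % 5 = 2 ∨ n % 5 = 3 ∨ n % 5 = 4 := by omega
    rcases hr with hr | hr | hr | hr | hr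
    · simp only [PTm_0 h9 hr, PFm_0 h9 hr, CTm_0 h9 hr, CFm_0 h9 hr] at *
      rcases hxy with h1 | h1 <;> rcases hzx with hz1 | hz1 <;> omega
    · simp only [PTm_1 h9 hr, PFm_1 h9 hr, CTm_1 h9 hr, CFm_1 h9 hr] at *
      rcases hxy with h1 | h1 <;> rcases hzx with hz1 | hz1 <;> omega
    · simp only [PTm_2 h9 hr, PFm_2 h9 hr, CTm_2 h9 hr, CFm_2 h9 hr] at *
      rcases hxy with h1 | h1 <;> rcases hzx with hz1 | hz1 <;> omega
    · simp only [PTm_3 h9 hr, PFm_3 h9 hr, CTm_3 h9 hr, CFm_3 h9 hr] at *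
      rcases hxy with h1 | h1 <;> rcases hzx with hz1 | hz1 <;> omega
    · simp only [PTm_4 h9 hr, PFm_4 h9 hr, CTm_4 h9 hr, CFm_4 h9 hr] at *
      rcases hxy with h1 | h1 <;> rcases hzx with hz1 | hz1 <;> omega

lemma redT_nbrW {n x y z : ℕ} (hn : 5 ≤ n) (h2 : n % 2 = 1)
    (hx : x < n) (hy : y < n) (hz : z < n)
    (hxy : y = x + 1 ∨ y + n = x + 1) (hzx : x = z + 1 ∨ x + n = z + 1)
    (h : PTm n x)
    : PTm n y ∨ PTm n z ∨ PFm n x := by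
  by_cases h9 : n = 9
  · simp only [PTm_9 h9, PFm_9 h9, CTm_9 h9, CFm_9 h9] at *
    rcases hxy with h1 | h1 <;> rcases hzx with hz1 | hz1 <;> omega
  · have hr : n % 5 = 0 ∨ n % 5 = 1 ∨ n % 5 = 2 ∨ n % 5 = 3 ∨ n % 5 = 4 := by omega
    rcases hr with hr | hr | hr | hr | hr
    · simp only [PTm_0 h9 hr, PFm_0 h9 hr, CTm_0 h9 hr, CFm_0 h9 hr] at *
      rcases hxy with h1 | h1 <;> rcases hzx with hz1 | hz1 <;> omega
    · simp only [PTm_1 h9 hr, PFm_1 h9 hr, CTm_1 h9 hr, CFm_1 h9 hr] at *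
      rcases hxy with h1 | h1 <;> rcases hzx with hz1 | hz1 <;> omega
    · simp only [PTm_2 h9 hr, PFm_2 h9 hr, CTm_2 h9 hr, CFm_2 h9 hr] at *
      rcases hxy with h1 | h1 <;> rcases hzx with hz1 | hz1 <;> omega
    · simp only [PTm_3 h9 hr, PFm_3 h9 hr, CTm_3 h9 hr, CFm_3 h9 hr] at *
      rcases hxy with h1 | h1 <;> rcases hzx with hz1 | hz1 <;> omega
    · simp only [PTm_4 h9 hr, PFm_4 h9 hr, CTm_4 h9 hr, CFm_4 h9 hr] at *
      rcases hxy with h1 | h1 <;> rcases hzx with hz1 | hz1 <;> omega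

lemma blueFW {n x y z : ℕ} (hn : 5 ≤ n) (h2 : n % 2 = 1)
    (hx : x < n) (hy : y < n) (hz : z < n)
    (hxy : x = y + 2 ∨ x + n = y + 2) (hzx : z = x + 2 ∨ z + n = x + 2)
    (h : ¬ PFm n x)
    : (PFm n y ∨ PFm n z) ∧ (PFm n y ∨ PTm n x) ∧ (PFm n z ∨ PTm n x) := by
  by_cases h9 : n = 9
  · simp only [PTm_9 h9, PFm_9 h9, CTm_9 h9, CFm_9 h9] at *
    rcases hxy with h1 | h1 <;> rcases hzx with hz1 | hz1 <;> refine ⟨?_, ?_, ?_⟩ <;> omega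
  · have hr : n % 5 = 0 ∨ n % 5 = 1 ∨ n % 5 = 2 ∨ n % 5 = 3 ∨ n % 5 = 4 := by omega
    rcases hr with hr | hr | hr | hr | hr
    · simp only [PTm_0 h9 hr, PFm_0 h9 hr, CTm_0 h9 hr, CFm_0 h9 hr] at *
      rcases hxy with h1 | h1 <;> rcases hzx with hz1 | hz1 <;> refine ⟨?_, ?_, ?_⟩ <;> omega
    · simp only [PTm_1 h9 hr, PFm_1 h9 hr, CTm_1 h9 hr, CFm_1 h9 hr] at *
      rcases hxy with h1 | h1 <;> rcases hzx with hz1 | hz1 <;> refine ⟨?_, ?_, ?_⟩ <;> omega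
    · simp only [PTm_2 h9 hr, PFm_2 h9 hr, CTm_2 h9 hr, CFm_2 h9 hr] at *
      rcases hxy with h1 | h1 <;> rcases hzx with hz1 | hz1 <;> refine ⟨?_, ?_, ?_⟩ <;> omega
    · simp only [PTm_3 h9 hr, PFm_3 h9 hr, CTm_3 h9 hr, CFm_3 h9 hr] at *
      rcases hxy with h1 | h1 <;> rcases hzx with hz1 | hz1 <;> refine ⟨?_, ?_, ?_⟩ <;> omega
    · simp only [PTm_4 h9 hr, PFm_4 h9 hr, CTm_4 h9 hr, CFm_4 h9 hr] at *
      rcases hxy with h1 | h1 <;> rcases hzx with hz1 | hz1 <;> refine ⟨?_, ?_, ?_⟩ <;> omega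

lemma blueTW {n x y z : ℕ} (hn : 5 ≤ n) (h2 : n % 2 = 1)
    (hx : x < n) (hy : y < n) (hz : z < n)
    (hxy : y = x + 1 ∨ y + n = x + 1) (hzx : x = z + 1 ∨ x + n = z + 1)
    (h : ¬ PTm n x)
    : (PTm n y ∨ PTm n z) ∧ (PTm n y ∨ PFm n x) ∧ (PTm n z ∨ PFm n x) := by
  by_cases h9 : n = 9
  · simp only [PTm_9 h9, PFm_9 h9, CTm_9 h9, CFm_9 h9] at *
    rcases hxy with h1 | h1 <;> rcases hzx with hz1 | hz1 <;> refine ⟨?_, ?_, ?_⟩ <;> omega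
  · have hr : n % 5 = 0 ∨ n % 5 = 1 ∨ n % 5 = 2 ∨ n % 5 = 3 ∨ n % 5 = 4 := by omega
    rcases hr with hr | hr | hr | hr | hr
    · simp only [PTm_0 h9 hr, PFm_0 h9 hr, CTm_0 h9 hr, CFm_0 h9 hr] at *
      rcases hxy with h1 | h1 <;> rcases hzx with hz1 | hz1 <;> refine ⟨?_, ?_, ?_⟩ <;> omega
    · simp only [PTm_1 h9 hr, PFm_1 h9 hr, CTm_1 h9 hr, CFm_1 h9 hr] at *
      rcases hxy with h1 | h1 <;> rcases hzx with hz1 | hz1 <;> refine ⟨?_, ?_, ?_⟩ <;> omega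
    · simp only [PTm_2 h9 hr, PFm_2 h9 hr, CTm_2 h9 hr, CFm_2 h9 hr] at *
      rcases hxy with h1 | h1 <;> rcases hzx with hz1 | hz1 <;> refine ⟨?_, ?_, ?_⟩ <;> omega
    · simp only [PTm_3 h9 hr, PFm_3 h9 hr, CTm_3 h9 hr, CFm_3 h9 hr] at *
      rcases hxy with h1 | h1 <;> rcases hzx with hz1 | hz1 <;> refine ⟨?_, ?_, ?_⟩ <;> omega
    · simp only [PTm_4 h9 hr, PFm_4 h9 hr, CTm_4 h9 hr, CFm_4 h9 hr] at *
      rcases hxy with h1 | h1 <;> rcases hzx with hz1 | hz1 <;> refine ⟨?_, ?_, ?_⟩ <;> omega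

lemma E1TTW {n x y : ℕ} (hn : 5 ≤ n) (h2 : n % 2 = 1)
    (hx : x < n) (hy : y < n)
    (hxy : y = x + 1 ∨ y + n = x + 1) (ha : PTm n x) (hb : PTm n y)
    : (CTm n x ∧ ¬ CTm n y) ∨ (¬ CTm n x ∧ CTm n y) := by
  by_cases h9 : n = 9
  · simp only [PTm_9 h9, PFm_9 h9, CTm_9 h9, CFm_9 h9] at *
    rcases hxy with h1 | h1 <;> omega
  · have hr : n % 5 = 0 ∨ n % 5 = 1 ∨ n % 5 = 2 ∨ n % 5 = 3 ∨ n % 5 = 4 := by omega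
    rcases hr with hr | hr | hr | hr | hr
    · simp only [PTm_0 h9 hr, PFm_0 h9 hr, CTm_0 h9 hr, CFm_0 h9 hr] at *
      rcases hxy with h1 | h1 <;> omega
    · simp only [PTm_1 h9 hr, PFm_1 h9 hr, CTm_1 h9 hr, CFm_1 h9 hr] at *
      rcases hxy with h1 | h1 <;> omega
    · simp only [PTm_2 h9 hr, PFm_2 h9 hr, CTm_2 h9 hr, CFm_2 h9 hr] at *
      rcases hxy with h1 | h1 <;> omega
    · simp only [PTm_3 h9 hr, PFm_3 h9 hr, CTm_3 h9 hr, CFm_3 h9 hr] at *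
      rcases hxy with h1 | h1 <;> omega
    · simp only [PTm_4 h9 hr, PFm_4 h9 hr, CTm_4 h9 hr, CFm_4 h9 hr] at *
      rcases hxy with h1 | h1 <;> omega

lemma E1FFW {n x y : ℕ} (hn : 5 ≤ n) (h2 : n % 2 = 1)
    (hx : x < n) (hy : y < n)
    (hxy : y = x + 2 ∨ y + n = x + 2) (ha : PFm n x) (hb : PFm n y)
    : (CFm n x ∧ ¬ CFm n y) ∨ (¬ CFm n x ∧ CFm n y) := by
  by_cases h9 : n = 9
  · simp only [PTm_9 h9, PFm_9 h9, CTm_9 h9, CFm_9 h9] at *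
    rcases hxy with h1 | h1 <;> omega
  · have hr : n % 5 = 0 ∨ n % 5 = 1 ∨ n % 5 = 2 ∨ n % 5 = 3 ∨ n % 5 = 4 := by omega
    rcases hr with hr | hr | hr | hr | hr
    · simp only [PTm_0 h9 hr, PFm_0 h9 hr, CTm_0 h9 hr, CFm_0 h9 hr] at *
      rcases hxy with h1 | h1 <;> omega
    · simp only [PTm_1 h9 hr, PFm_1 h9 hr, CTm_1 h9 hr, CFm_1 h9 hr] at *
      rcases hxy with h1 | h1 <;> omega
    · simp only [PTm_2 h9 hr, PFm_2 h9 hr, CTm_2 h9 hr, CFm_2 h9 hr] at *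
      rcases hxy with h1 | h1 <;> omega
    · simp only [PTm_3 h9 hr, PFm_3 h9 hr, CTm_3 h9 hr, CFm_3 h9 hr] at *
      rcases hxy with h1 | h1 <;> omega
    · simp only [PTm_4 h9 hr, PFm_4 h9 hr, CTm_4 h9 hr, CFm_4 h9 hr] at *
      rcases hxy with h1 | h1 <;> omega

lemma E1TFW {n x : ℕ} (hn : 5 ≤ n) (h2 : n % 2 = 1)
    (hx : x < n)
    (ha : PTm n x) (hb : PFm n x)
    : (CTm n x ∧ ¬ CFm n x) ∨ (¬ CTm n x ∧ CFm n x) := by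
  by_cases h9 : n = 9
  · simp only [PTm_9 h9, PFm_9 h9, CTm_9 h9, CFm_9 h9] at *
    omega
  · have hr : n % 5 = 0 ∨ n % 5 = 1 ∨ n % 5 = 2 ∨ n % 5 = 3 ∨ n % 5 = 4 := by omega
    rcases hr with hr | hr | hr | hr | hr
    · simp only [PTm_0 h9 hr, PFm_0 h9 hr, CTm_0 h9 hr, CFm_0 h9 hr] at *
      omega
    · simp only [PTm_1 h9 hr, PFm_1 h9 hr, CTm_1 h9 hr, CFm_1 h9 hr] at *
      omega
    · simp only [PTm_2 h9 hr, PFm_2 h9 hr, CTm_2 h9 hr, CFm_2 h9 hr] at *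
      omega
    · simp only [PTm_3 h9 hr, PFm_3 h9 hr, CTm_3 h9 hr, CFm_3 h9 hr] at *
      omega
    · simp only [PTm_4 h9 hr, PFm_4 h9 hr, CTm_4 h9 hr, CFm_4 h9 hr] at *
      omega

lemma E2TW {n x y z : ℕ} (hn : 5 ≤ n) (h2 : n % 2 = 1)
    (hx : x < n) (hy : y < n) (hz : z < n)
    (hxy : y = x + 1 ∨ y + n = x + 1) (hzx : x = z + 1 ∨ x + n = z + 1)
    (h : PTm n x) (hc : ¬ CTm n x)
    : ¬ (CTm n y ∧ CTm n z) ∧ ¬ (CTm n y ∧ CFm n x) ∧ ¬ (CTm n z ∧ CFm n x) := by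
  by_cases h9 : n = 9
  · simp only [PTm_9 h9, PFm_9 h9, CTm_9 h9, CFm_9 h9] at *
    rcases hxy with h1 | h1 <;> rcases hzx with hz1 | hz1 <;> refine ⟨?_, ?_, ?_⟩ <;> omega
  · have hr : n % 5 = 0 ∨ n % 5 = 1 ∨ n % 5 = 2 ∨ n % 5 = 3 ∨ n % 5 = 4 := by omega
    rcases hr with hr | hr | hr | hr | hr
    · simp only [PTm_0 h9 hr, PFm_0 h9 hr, CTm_0 h9 hr, CFm_0 h9 hr] at *
      rcases hxy with h1 | h1 <;> rcases hzx with hz1 | hz1 <;> refine ⟨?_, ?_, ?_⟩ <;> omega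
    · simp only [PTm_1 h9 hr, PFm_1 h9 hr, CTm_1 h9 hr, CFm_1 h9 hr] at *
      rcases hxy with h1 | h1 <;> rcases hzx with hz1 | hz1 <;> refine ⟨?_, ?_, ?_⟩ <;> omega
    · simp only [PTm_2 h9 hr, PFm_2 h9 hr, CTm_2 h9 hr, CFm_2 h9 hr] at *
      rcases hxy with h1 | h1 <;> rcases hzx with hz1 | hz1 <;> refine ⟨?_, ?_, ?_⟩ <;> omega
    · simp only [PTm_3 h9 hr, PFm_3 h9 hr, CTm_3 h9 hr, CFm_3 h9 hr] at *
      rcases hxy with h1 | h1 <;> rcases hzx with hz1 | hz1 <;> refine ⟨?_, ?_, ?_⟩ <;> omega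
    · simp only [PTm_4 h9 hr, PFm_4 h9 hr, CTm_4 h9 hr, CFm_4 h9 hr] at *
      rcases hxy with h1 | h1 <;> rcases hzx with hz1 | hz1 <;> refine ⟨?_, ?_, ?_⟩ <;> omega

lemma E2FW {n x y z : ℕ} (hn : 5 ≤ n) (h2 : n % 2 = 1)
    (hx : x < n) (hy : y < n) (hz : z < n)
    (hxy : x = y + 2 ∨ x + n = y + 2) (hzx : z = x + 2 ∨ z + n = x + 2)
    (h : PFm n x) (hc : ¬ CFm n x)
    : ¬ (CFm n y ∧ CFm n z) ∧ ¬ (CFm n y ∧ CTm n x) ∧ ¬ (CFm n z ∧ CTm n x) := by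
  by_cases h9 : n = 9
  · simp only [PTm_9 h9, PFm_9 h9, CTm_9 h9, CFm_9 h9] at *
    rcases hxy with h1 | h1 <;> rcases hzx with hz1 | hz1 <;> refine ⟨?_, ?_, ?_⟩ <;> omega
  · have hr : n % 5 = 0 ∨ n % 5 = 1 ∨ n % 5 = 2 ∨ n % 5 = 3 ∨ n % 5 = 4 := by omega
    rcases hr with hr | hr | hr | hr | hr
    · simp only [PTm_0 h9 hr, PFm_0 h9 hr, CTm_0 h9 hr, CFm_0 h9 hr] at *
      rcases hxy with h1 | h1 <;> rcases hzx with hz1 | hz1 <;> refine ⟨?_, ?_, ?_⟩ <;> omega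
    · simp only [PTm_1 h9 hr, PFm_1 h9 hr, CTm_1 h9 hr, CFm_1 h9 hr] at *
      rcases hxy with h1 | h1 <;> rcases hzx with hz1 | hz1 <;> refine ⟨?_, ?_, ?_⟩ <;> omega
    · simp only [PTm_2 h9 hr, PFm_2 h9 hr, CTm_2 h9 hr, CFm_2 h9 hr] at *
      rcases hxy with h1 | h1 <;> rcases hzx with hz1 | hz1 <;> refine ⟨?_, ?_, ?_⟩ <;> omega
    · simp only [PTm_3 h9 hr, PFm_3 h9 hr, CTm_3 h9 hr, CFm_3 h9 hr] at *
      rcases hxy with h1 | h1 <;> rcases hzx with hz1 | hz1 <;> refine ⟨?_, ?_, ?_⟩ <;> omega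
    · simp only [PTm_4 h9 hr, PFm_4 h9 hr, CTm_4 h9 hr, CFm_4 h9 hr] at *
      rcases hxy with h1 | h1 <;> rcases hzx with hz1 | hz1 <;> refine ⟨?_, ?_, ?_⟩ <;> omega

/-! ### The graph side -/

instance instNeZeroGP (k : ℕ) : NeZero (2 * k + 1) := ⟨by omega⟩

/-- Transformed coordinate. -/
def X {n : ℕ} (i : ZMod n) : ℕ := ((-2 : ZMod n) * i).val

variable {k : ℕ}

lemma X_lt (i : ZMod (2 * k + 1)) : X i < 2 * k + 1 := ZMod.val_lt _

lemma cast_k : (-2 : ZMod (2 * k + 1)) * (k : ZMod (2 * k + 1)) = 1 := by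
  have h : ((2 * k + 1 : ℕ) : ZMod (2 * k + 1)) = 0 := ZMod.natCast_self _
  push_cast at h
  linear_combination -h

lemma X_inj {i j : ZMod (2 * k + 1)} (h : X i = X j) : i = j := by
  have h2 : (-2 : ZMod (2 * k + 1)) * i = -2 * j := by
    have h3 := congrArg (fun t : ℕ => (t : ZMod (2 * k + 1))) h
    simpa [X, ZMod.natCast_val, ZMod.cast_id] using h3
  have hu : IsUnit (-2 : ZMod (2 * k + 1)) :=
    IsUnit.of_mul_eq_one _ (cast_k (k := k))
  exact hu.mul_left_cancel h2

lemma val_shift {c : ℕ} (hc : c < 2 * k + 1) {z w : ZMod (2 * k + 1)}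
    (h : w = z + (c : ZMod (2 * k + 1))) :
    w.val = z.val + c ∨ w.val + (2 * k + 1) = z.val + c := by
  have hv : w.val = (z.val + c) % (2 * k + 1) := by
    rw [h, ZMod.val_add, ZMod.val_natCast_of_lt hc]
  have hz := ZMod.val_lt z
  rcases Nat.lt_or_ge (z.val + c) (2 * k + 1) with hlt | hge
  · left; rw [hv, Nat.mod_eq_of_lt hlt]
  · right; rw [hv, Nat.mod_eq_sub_mod hge, Nat.mod_eq_of_lt (by omega)]; omega

lemma rel_out (hk : 2 ≤ k) {i j : ZMod (2 * k + 1)} (h : j = i + 1) :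
    X i = X j + 2 ∨ X i + (2 * k + 1) = X j + 2 := by
  apply val_shift (by omega)
  subst h; push_cast; ring

lemma rel_in (hk : 2 ≤ k) {i j : ZMod (2 * k + 1)} (h : j = i + (k : ZMod (2 * k + 1))) :
    X j = X i + 1 ∨ X j + (2 * k + 1) = X i + 1 := by
  apply val_shift (by omega)
  subst h
  rw [mul_add, cast_k]
  push_cast; ring

lemma one_ne_zero' (hk : 2 ≤ k) : (1 : ZMod (2 * k + 1)) ≠ 0 := by
  haveI : Fact (1 < 2 * k + 1) := ⟨by omega⟩
  exact one_ne_zero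

lemma k_ne_zero (hk : 2 ≤ k) : (k : ZMod (2 * k + 1)) ≠ 0 := by
  intro h
  have h2 := congrArg ZMod.val h
  rw [ZMod.val_natCast_of_lt (by omega), ZMod.val_zero] at h2
  omega

lemma adjFF (hk : 2 ≤ k) (i : ZMod (2 * k + 1)) :
    (GP (2 * k + 1) k).Adj (false, i) (false, i + 1) := by
  rw [GP, SimpleGraph.fromRel_adj]
  refine ⟨?_, Or.inl (Or.inl ⟨rfl, rfl, rfl⟩)⟩
  intro h
  have h2 : i = i + 1 := congrArg Prod.snd h
  exact one_ne_zero' hk (by linear_combination -h2)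

lemma adjFT (i : ZMod (2 * k + 1)) :
    (GP (2 * k + 1) k).Adj (false, i) (true, i) := by
  rw [GP, SimpleGraph.fromRel_adj]
  exact ⟨by simp, Or.inl (Or.inr (Or.inl ⟨rfl, rfl, rfl⟩))⟩

lemma adjTT (hk : 2 ≤ k) (i : ZMod (2 * k + 1)) :
    (GP (2 * k + 1) k).Adj (true, i) (true, i + (k : ZMod (2 * k + 1))) := by
  rw [GP, SimpleGraph.fromRel_adj]
  refine ⟨?_, Or.inl (Or.inr (Or.inr ⟨rfl, rfl, rfl⟩))⟩
  intro h
  have h2 : i = i + (k : ZMod (2 * k + 1)) := congrArg Prod.snd h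
  exact k_ne_zero hk (by linear_combination -h2)

lemma adjFF' (hk : 2 ≤ k) (i : ZMod (2 * k + 1)) :
    (GP (2 * k + 1) k).Adj (false, i) (false, i - 1) := by
  have h := (adjFF hk (i - 1)).symm
  have h2 : i - 1 + 1 = i := by ring
  rwa [h2] at h

lemma adjTT' (hk : 2 ≤ k) (i : ZMod (2 * k + 1)) :
    (GP (2 * k + 1) k).Adj (true, i) (true, i - (k : ZMod (2 * k + 1))) := by
  have h := (adjTT hk (i - (k : ZMod (2 * k + 1)))).symm
  have h2 : i - (k : ZMod (2 * k + 1)) + (k : ZMod (2 * k + 1)) = i := by ring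
  rwa [h2] at h

lemma adj_cases {v w : Bool × ZMod (2 * k + 1)} (h : (GP (2 * k + 1) k).Adj v w) :
    (v.1 = false ∧ w.1 = false ∧ (w.2 = v.2 + 1 ∨ v.2 = w.2 + 1)) ∨
    (v.1 ≠ w.1 ∧ v.2 = w.2) ∨
    (v.1 = true ∧ w.1 = true ∧
      (w.2 = v.2 + (k : ZMod (2 * k + 1)) ∨ v.2 = w.2 + (k : ZMod (2 * k + 1)))) := by
  rw [GP, SimpleGraph.fromRel_adj] at h
  obtain ⟨hne, h | h⟩ := h <;> rcases h with h | h | h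
  · exact Or.inl ⟨h.1, h.2.1, Or.inl h.2.2⟩
  · exact Or.inr (Or.inl ⟨by rw [h.1, h.2.1]; simp, h.2.2⟩)
  · exact Or.inr (Or.inr ⟨h.1, h.2.1, Or.inl h.2.2⟩)
  · exact Or.inl ⟨h.2.1, h.1, Or.inr h.2.2⟩
  · exact Or.inr (Or.inl ⟨by rw [h.1, h.2.1]; simp, h.2.2.symm⟩)
  · exact Or.inr (Or.inr ⟨h.2.1, h.1, Or.inr h.2.2⟩)

/-- The coloring. -/
def red (k : ℕ) (v : Bool × ZMod (2 * k + 1)) : Bool :=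
  if v.1 = true then decide (PTm (2 * k + 1) (X v.2)) else decide (PFm (2 * k + 1) (X v.2))

lemma redT_iff {i : ZMod (2 * k + 1)} : red k (true, i) = true ↔ PTm (2 * k + 1) (X i) := by
  simp [red]

lemma redF_iff {i : ZMod (2 * k + 1)} : red k (false, i) = true ↔ PFm (2 * k + 1) (X i) := by
  simp [red]

lemma redT_iff' {i : ZMod (2 * k + 1)} : red k (true, i) = false ↔ ¬ PTm (2 * k + 1) (X i) := by
  simp [red]

lemma redF_iff' {i : ZMod (2 * k + 1)} : red k (false, i) = false ↔ ¬ PFm (2 * k + 1) (X i) := by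
  simp [red]

/-- Center predicate. -/
def Ctr (k : ℕ) (v : Bool × ZMod (2 * k + 1)) : Prop :=
  if v.1 = true then CTm (2 * k + 1) (X v.2) else CFm (2 * k + 1) (X v.2)

lemma Ctr_T {i : ZMod (2 * k + 1)} : Ctr k (true, i) ↔ CTm (2 * k + 1) (X i) := by
  simp [Ctr]

lemma Ctr_F {i : ZMod (2 * k + 1)} : Ctr k (false, i) ↔ CFm (2 * k + 1) (X i) := by
  simp [Ctr]

lemma ne_X {v w : Bool × ZMod (2 * k + 1)} (hne : v ≠ w) :
    v.1 = w.1 → X v.2 ≠ X w.2 := fun h1 h2 => hne (Prod.ext h1 (X_inj h2))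

lemma optionsF {i : ZMod (2 * k + 1)} {w : Bool × ZMod (2 * k + 1)}
    (h : (GP (2 * k + 1) k).Adj (false, i) w) :
    w = (false, i + 1) ∨ w = (false, i - 1) ∨ w = (true, i) := by
  obtain ⟨b, j⟩ := w
  rcases adj_cases h with ⟨h1, h2, h3 | h3⟩ | ⟨h1, h2⟩ | ⟨h1, h2, h3⟩
  · exact Or.inl (by simp only at h2 h3; rw [h2, h3])
  · refine Or.inr (Or.inl ?_)
    simp only at h2 h3
    rw [h2]
    congr 1
    rw [h3]; ring
  · refine Or.inr (Or.inr ?_)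
    simp only at h1 h2
    have hb : b = true := by revert h1; cases b <;> simp
    rw [hb, ← h2]
  · simp at h1

lemma optionsT {i : ZMod (2 * k + 1)} {w : Bool × ZMod (2 * k + 1)}
    (h : (GP (2 * k + 1) k).Adj (true, i) w) :
    w = (true, i + (k : ZMod (2 * k + 1))) ∨
      w = (true, i - (k : ZMod (2 * k + 1))) ∨ w = (false, i) := by
  obtain ⟨b, j⟩ := w
  rcases adj_cases h with ⟨h1, h2, h3⟩ | ⟨h1, h2⟩ | ⟨h1, h2, h3 | h3⟩
  · simp at h1
  · refine Or.inr (Or.inr ?_)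
    simp only at h1 h2
    have hb : b = false := by revert h1; cases b <;> simp
    rw [hb, ← h2]
  · exact Or.inl (by simp only at h2 h3; rw [h2, h3])
  · refine Or.inr (Or.inl ?_)
    simp only at h2 h3
    rw [h2]
    congr 1
    rw [h3]; ring

lemma E1G (hk : 2 ≤ k) {v w : Bool × ZMod (2 * k + 1)}
    (h : (GP (2 * k + 1) k).Adj v w)
    (hv : red k v = true) (hw : red k w = true) :
    (Ctr k v ∧ ¬ Ctr k w) ∨ (¬ Ctr k v ∧ Ctr k w) := by
  have hn : 5 ≤ 2 * k + 1 := by omega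
  have h2 : (2 * k + 1) % 2 = 1 := by omega
  obtain ⟨a, i⟩ := v; obtain ⟨b, j⟩ := w
  rcases adj_cases h with ⟨h1, h1', h3 | h3⟩ | ⟨h1, h1'⟩ | ⟨h1, h1', h3 | h3⟩
  · simp only at h1 h1' h3
    subst h1; subst h1'
    rw [redF_iff] at hv hw
    rw [Ctr_F, Ctr_F]
    have hrel := rel_out hk h3
    have := E1FFW hn h2 (X_lt j) (X_lt i) hrel hw hv
    tauto
  · simp only at h1 h1' h3
    subst h1; subst h1'
    rw [redF_iff] at hv hw
    rw [Ctr_F, Ctr_F]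
    have hrel := rel_out hk h3
    have := E1FFW hn h2 (X_lt i) (X_lt j) hrel hv hw
    tauto
  · simp only at h1 h1'
    cases a <;> cases b <;> simp at h1
    · -- a = false, b = true
      rw [redF_iff] at hv; rw [redT_iff] at hw
      rw [Ctr_F, Ctr_T]
      rw [show (j : ZMod (2 * k + 1)) = i from h1'.symm] at hw ⊢
      have := E1TFW hn h2 (X_lt i) hw hv
      tauto
    · -- a = true, b = false
      rw [redT_iff] at hv; rw [redF_iff] at hw
      rw [Ctr_T, Ctr_F]
      rw [show (j : ZMod (2 * k + 1)) = i from h1'.symm] at hw ⊢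
      have := E1TFW hn h2 (X_lt i) hv hw
      tauto
  · simp only at h1 h1' h3
    subst h1; subst h1'
    rw [redT_iff] at hv hw
    rw [Ctr_T, Ctr_T]
    have hrel := rel_in hk h3
    have := E1TTW hn h2 (X_lt i) (X_lt j) hrel hv hw
    tauto
  · simp only at h1 h1' h3
    subst h1; subst h1'
    rw [redT_iff] at hv hw
    rw [Ctr_T, Ctr_T]
    have hrel := rel_in hk h3
    have := E1TTW hn h2 (X_lt j) (X_lt i) hrel hw hv
    tauto

lemma E2G (hk : 2 ≤ k) {v u w : Bool × ZMod (2 * k + 1)}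
    (hv : red k v = true) (hcv : ¬ Ctr k v)
    (h1 : (GP (2 * k + 1) k).Adj v u) (h2 : (GP (2 * k + 1) k).Adj v w)
    (hne : u ≠ w) (cu : Ctr k u) (cw : Ctr k w) : False := by
  have hn : 5 ≤ 2 * k + 1 := by omega
  have h2' : (2 * k + 1) % 2 = 1 := by omega
  obtain ⟨a, i⟩ := v
  cases a
  · rw [redF_iff] at hv; rw [Ctr_F] at hcv
    have hy := rel_out hk (rfl : i + 1 = i + 1)
    have hz := rel_out hk (show i = (i - 1) + 1 by ring)
    have hE := E2FW hn h2' (X_lt i) (X_lt (i + 1)) (X_lt (i - 1)) hy hz hv hcv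
    rcases optionsF h1 with rfl | rfl | rfl <;> rcases optionsF h2 with rfl | rfl | rfl <;>
      first
        | exact hne rfl
        | (rw [Ctr_F] at cu cw; tauto)
        | (rw [Ctr_F] at cu; rw [Ctr_T] at cw; tauto)
        | (rw [Ctr_T] at cu; rw [Ctr_F] at cw; tauto)
        | (rw [Ctr_T] at cu cw; tauto)
  · rw [redT_iff] at hv; rw [Ctr_T] at hcv
    have hy := rel_in hk (rfl : i + (k : ZMod (2 * k + 1)) = i + (k : ZMod (2 * k + 1)))
    have hz := rel_in hk (show i = (i - (k : ZMod (2 * k + 1))) + (k : ZMod (2 * k + 1)) by ring)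
    have hE := E2TW hn h2' (X_lt i) (X_lt (i + (k : ZMod (2 * k + 1))))
      (X_lt (i - (k : ZMod (2 * k + 1)))) hy hz hv hcv
    rcases optionsT h1 with rfl | rfl | rfl <;> rcases optionsT h2 with rfl | rfl | rfl <;>
      first
        | exact hne rfl
        | (rw [Ctr_T] at cu cw; tauto)
        | (rw [Ctr_T] at cu; rw [Ctr_F] at cw; tauto)
        | (rw [Ctr_F] at cu; rw [Ctr_T] at cw; tauto)
        | (rw [Ctr_F] at cu cw; tauto)

end GPCrumby

open GPCrumby in
/-- For every k ≥ 2, the generalized Petersen graph GP(2k+1, k) has a crumby coloring. -/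
theorem GP_odd_crumby (k : ℕ) (hk : 2 ≤ k) :
    ∃ red : Bool × ZMod (2 * k + 1) → Bool, Crumby (GP (2 * k + 1) k) red := by
  have hn : 5 ≤ 2 * k + 1 := by omega
  have h2 : (2 * k + 1) % 2 = 1 := by omega
  refine ⟨red k, ?_, ?_, ?_⟩
  · -- blue condition
    rintro ⟨a, i⟩ hblue w1 hw1 w2 hw2
    obtain ⟨hadj1, hb1⟩ := hw1
    obtain ⟨hadj2, hb2⟩ := hw2
    cases a
    · rw [redF_iff'] at hblue
      have hy := rel_out hk (rfl : i + 1 = i + 1)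
      have hz := rel_out hk (show i = (i - 1) + 1 by ring)
      have hB := blueFW hn h2 (X_lt i) (X_lt (i + 1)) (X_lt (i - 1)) hy hz hblue
      rcases optionsF hadj1 with rfl | rfl | rfl <;>
        rcases optionsF hadj2 with rfl | rfl | rfl <;>
        first
          | rfl
          | (exfalso;
             first
               | rw [redF_iff'] at hb1 hb2
               | (rw [redF_iff'] at hb1; rw [redT_iff'] at hb2)
               | (rw [redT_iff'] at hb1; rw [redF_iff'] at hb2)
               | rw [redT_iff'] at hb1 hb2
             tauto)
    · rw [redT_iff'] at hblue
      have hy := rel_in hk (rfl : i + (k : ZMod (2 * k + 1)) = i + (k : ZMod (2 * k + 1)))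
      have hz := rel_in hk (show i = (i - (k : ZMod (2 * k + 1))) + (k : ZMod (2 * k + 1)) by ring)
      have hB := blueTW hn h2 (X_lt i) (X_lt (i + (k : ZMod (2 * k + 1))))
        (X_lt (i - (k : ZMod (2 * k + 1)))) hy hz hblue
      rcases optionsT hadj1 with rfl | rfl | rfl <;>
        rcases optionsT hadj2 with rfl | rfl | rfl <;>
        first
          | rfl
          | (exfalso;
             first
               | rw [redF_iff'] at hb1 hb2
               | (rw [redF_iff'] at hb1; rw [redT_iff'] at hb2)
               | (rw [redT_iff'] at hb1; rw [redF_iff'] at hb2)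
               | rw [redT_iff'] at hb1 hb2
             tauto)
  · -- red has a red neighbor
    rintro ⟨a, i⟩ hred
    cases a
    · rw [redF_iff] at hred
      have hy := rel_out hk (rfl : i + 1 = i + 1)
      have hz := rel_out hk (show i = (i - 1) + 1 by ring)
      rcases redF_nbrW hn h2 (X_lt i) (X_lt (i + 1)) (X_lt (i - 1)) hy hz hred with
        h | h | h
      · exact ⟨(false, i + 1), adjFF hk i, redF_iff.mpr h⟩
      · exact ⟨(false, i - 1), adjFF' hk i, redF_iff.mpr h⟩
      · exact ⟨(true, i), adjFT i, redT_iff.mpr h⟩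
    · rw [redT_iff] at hred
      have hy := rel_in hk (rfl : i + (k : ZMod (2 * k + 1)) = i + (k : ZMod (2 * k + 1)))
      have hz := rel_in hk (show i = (i - (k : ZMod (2 * k + 1))) + (k : ZMod (2 * k + 1)) by ring)
      rcases redT_nbrW hn h2 (X_lt i) (X_lt (i + (k : ZMod (2 * k + 1))))
        (X_lt (i - (k : ZMod (2 * k + 1)))) hy hz hred with h | h | h
      · exact ⟨(true, i + (k : ZMod (2 * k + 1))), adjTT hk i, redT_iff.mpr h⟩
      · exact ⟨(true, i - (k : ZMod (2 * k + 1))), adjTT' hk i, redT_iff.mpr h⟩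
      · exact ⟨(false, i), (adjFT i).symm, redF_iff.mpr h⟩
  · -- no red path with 3 edges
    rintro ⟨a, b, c, d, r1, r2, r3, r4, d12, d13, d14, d23, d24, d34, h12, h23, h34⟩
    rcases E1G hk h23 r2 r3 with ⟨cb, ncc⟩ | ⟨ncb, cc⟩
    · rcases E1G hk h34 r3 r4 with ⟨cc', _⟩ | ⟨_, cd⟩
      · exact ncc cc'
      · exact E2G hk r3 ncc h23.symm h34 d24 cb cd
    · rcases E1G hk h12 r1 r2 with ⟨ca, _⟩ | ⟨_, cb⟩
      · exact E2G hk r2 ncb h12.symm h23 d13 ca cc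
      · exact ncb cb
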